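/- arXiv:1312.4063 — 6 statements merged into one kernel-verified Lean document; each statement's English description precedes it below -/
import Mathlib

section
/- Let A be an associative complex superalgebra containing even elements E, F, K (with K invertible) satisfying the U_{q_*}(sl(2)) relations KE = q_*^2 EK, KF = q_*^{-2} FK, [E,F] = (K - K^{-1})/(q_* - q_*^{-1}), and containing odd elements ξ, η with ξ² = η² = 1, ξη = -ηξ, that commute with E, F, K. Then the elements 𝓔 = ξE, 𝓕 = ηF, 𝓚 = iξηK satisfy the U_q(osp(2|1)) relations: 𝓔𝓕 + 𝓕𝓔 = (𝓚 - 𝓚^{-1})/(q + q^{-1}), 𝓚𝓔 = q²𝓔𝓚, 𝓚𝓕 = q^{-2}𝓕𝓚, where q_* = -i·q. -/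
open Complex

/-- If `E, F, K` (with `K` invertible, inverse `K'`) satisfy the
`U_{q_*}(sl(2))` relations with `q_* = -I*q`, and `ξ, η` are Clifford elements
(`ξ² = η² = 1`, `ξη = -ηξ`) commuting with `E, F, K, K'`, then
`𝓔 = ξE`, `𝓕 = ηF`, `𝓚 = i·ξηK` (with `𝓚⁻¹ = i·ξηK'`) satisfy the
`U_q(osp(2|1))` relations. -/
theorem osp21_from_sl2_spinor (q : ℂ) (hq : q ≠ 0)
    (hq1 : q + q⁻¹ ≠ 0) (hq2 : (-I * q) - (-I * q)⁻¹ ≠ 0)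
    (A : Type*) [Ring A] [Algebra ℂ A]
    (E F K K' ξ η : A)
    (hK : K * K' = 1) (hK' : K' * K = 1)
    (hKE : K * E = ((-I * q) ^ 2) • (E * K))
    (hKF : K * F = ((-I * q) ^ (-2 : ℤ)) • (F * K))
    (hEF : E * F - F * E = ((-I * q) - (-I * q)⁻¹)⁻¹ • (K - K'))
    (hξ : ξ * ξ = 1) (hη : η * η = 1) (hξη : ξ * η = -(η * ξ))
    (hξE : ξ * E = E * ξ) (hξF : ξ * F = F * ξ)
    (hξK : ξ * K = K * ξ) (hξK' : ξ * K' = K' * ξ)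
    (hηE : η * E = E * η) (hηF : η * F = F * η)
    (hηK : η * K = K * η) (hηK' : η * K' = K' * η) :
    (ξ * E) * (η * F) + (η * F) * (ξ * E)
        = (q + q⁻¹)⁻¹ • (I • (ξ * η * K) - I • (ξ * η * K')) ∧
    (I • (ξ * η * K)) * (ξ * E) = (q ^ 2) • ((ξ * E) * (I • (ξ * η * K))) ∧
    (I • (ξ * η * K)) * (η * F)
        = (q ^ (-2 : ℤ)) • ((η * F) * (I • (ξ * η * K))) := by
  have hηξ : η * ξ = -(ξ * η) := by rw [hξη, neg_neg]
  have cη : ∀ x : A, η * (ξ * x) = -(ξ * (η * x)) := fun x => by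
    rw [← mul_assoc, hηξ, neg_mul, mul_assoc]
  have cξξ : ∀ x : A, ξ * (ξ * x) = x := fun x => by rw [← mul_assoc, hξ, one_mul]
  have cηη : ∀ x : A, η * (η * x) = x := fun x => by rw [← mul_assoc, hη, one_mul]
  have cξE : ∀ x : A, E * (ξ * x) = ξ * (E * x) := fun x => by
    rw [← mul_assoc, ← hξE, mul_assoc]
  have cηE : ∀ x : A, E * (η * x) = η * (E * x) := fun x => by
    rw [← mul_assoc, ← hηE, mul_assoc]
  have cξF : ∀ x : A, F * (ξ * x) = ξ * (F * x) := fun x => by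
    rw [← mul_assoc, ← hξF, mul_assoc]
  have cηF : ∀ x : A, F * (η * x) = η * (F * x) := fun x => by
    rw [← mul_assoc, ← hηF, mul_assoc]
  have cξK : ∀ x : A, K * (ξ * x) = ξ * (K * x) := fun x => by
    rw [← mul_assoc, ← hξK, mul_assoc]
  have cηK : ∀ x : A, K * (η * x) = η * (K * x) := fun x => by
    rw [← mul_assoc, ← hηK, mul_assoc]
  have hsq : ((-I * q) : ℂ) ^ 2 = -(q ^ 2) := by
    rw [show ((-I * q) : ℂ) ^ 2 = I ^ 2 * q ^ 2 by ring, I_sq]; ring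
  have hzsq : ((-I * q) : ℂ) ^ (-2 : ℤ) = -(q ^ (-2 : ℤ)) := by
    rw [zpow_neg, zpow_neg, zpow_two, zpow_two,
      show ((-I * q) * (-I * q) : ℂ) = I ^ 2 * (q * q) by ring, I_sq, neg_one_mul, inv_neg]
  refine ⟨?_, ?_, ?_⟩
  · have key : (ξ * E) * (η * F) + (η * F) * (ξ * E)
        = ξ * (η * (E * F - F * E)) := by
      simp only [mul_sub, mul_assoc, cηE, cξF, cη, cξE, cηF]
      noncomm_ring
    have hc : ((-I * q) - (-I * q)⁻¹)⁻¹ = (q + q⁻¹)⁻¹ * I := by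
      rw [show ((-I * q) - (-I * q)⁻¹ : ℂ) = -I * (q + q⁻¹) by
            rw [mul_inv, inv_neg, inv_I, neg_neg]; ring,
        mul_inv, inv_neg, inv_I, neg_neg]
      ring
    rw [key, hEF, hc]
    simp only [smul_sub, mul_smul_comm, smul_smul, mul_sub, mul_assoc]
  · simp only [smul_mul_assoc, mul_smul_comm, mul_assoc, cξK, cηK, cη, cξE, cηE, cξξ, cηη,
      hKE, hsq, mul_neg, neg_mul, smul_neg, smul_smul, neg_smul, neg_neg]
    match_scalars
    linear_combination (-(I * q ^ 2)) * I_sq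
  · simp only [smul_mul_assoc, mul_smul_comm, mul_assoc, cξK, cηK, cη, cξF, cηF, cξξ, cηη,
      hKF, hzsq, mul_neg, neg_mul, smul_neg, smul_smul, neg_smul, neg_neg]
    match_scalars
    rw [show ((-(I * q)) : ℂ) ^ (-2 : ℤ) = -(q ^ (-2 : ℤ)) by
      rw [zpow_neg, zpow_neg, zpow_two, zpow_two,
        show ((-(I * q)) * (-(I * q)) : ℂ) = I ^ 2 * (q * q) by ring, I_sq, neg_one_mul,
        inv_neg]]
    ring
end

section
/- In an associative algebra with elements 𝓔, 𝓕, 𝓚 (𝓚 invertible) satisfying 𝓔𝓕 + 𝓕𝓔 = (𝓚 - 𝓚^{-1})/(q + q^{-1}), 𝓚𝓔 = q²𝓔𝓚, 𝓚𝓕 = q^{-2}𝓕𝓚, for every positive integer n one has 𝓔𝓕ⁿ - (-1)ⁿ 𝓕ⁿ𝓔 = (qⁿ{n}_q/(1+q²))·𝓚𝓕^{n-1} + ((-1)ⁿ q^{-n}{n}_q/(1+q^{-2}))·𝓚^{-1}𝓕^{n-1}, where {n}_q = (q^{-n} - (-1)ⁿqⁿ)/(q + q^{-1}). -/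
open Complex

set_option maxHeartbeats 1000000

/-- In an algebra with `𝓔, 𝓕, 𝓚` (`𝓚` invertible with inverse `𝓚'`)
satisfying the `U_q(osp(2|1))` relations, for every `n ≥ 1`:
`𝓔𝓕ⁿ - (-1)ⁿ𝓕ⁿ𝓔 = (qⁿ{n}_q/(1+q²))·𝓚𝓕^{n-1} + ((-1)ⁿq^{-n}{n}_q/(1+q^{-2}))·𝓚'𝓕^{n-1}`. -/
theorem osp21_EF_power_relation (q : ℂ) (hq : q ≠ 0)
    (hq1 : q + q⁻¹ ≠ 0) (hq2 : 1 + q ^ 2 ≠ 0) (hq3 : 1 + q ^ (-2 : ℤ) ≠ 0)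
    (A : Type*) [Ring A] [Algebra ℂ A]
    (𝓔 𝓕 𝓚 𝓚' : A)
    (hK : 𝓚 * 𝓚' = 1) (hK' : 𝓚' * 𝓚 = 1)
    (hEF : 𝓔 * 𝓕 + 𝓕 * 𝓔 = (q + q⁻¹)⁻¹ • (𝓚 - 𝓚'))
    (hKE : 𝓚 * 𝓔 = (q ^ 2) • (𝓔 * 𝓚))
    (hKF : 𝓚 * 𝓕 = (q ^ (-2 : ℤ)) • (𝓕 * 𝓚))
    (n : ℕ) (hn : 1 ≤ n) :
    𝓔 * 𝓕 ^ n - ((-1 : ℂ) ^ n) • (𝓕 ^ n * 𝓔)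
      = ((q ^ n * ((q ^ (-(n : ℤ)) - (-1 : ℂ) ^ n * q ^ (n : ℤ)) / (q + q⁻¹)))
            / (1 + q ^ 2)) • (𝓚 * 𝓕 ^ (n - 1))
        + (((-1 : ℂ) ^ n * q ^ (-(n : ℤ))
              * ((q ^ (-(n : ℤ)) - (-1 : ℂ) ^ n * q ^ (n : ℤ)) / (q + q⁻¹)))
            / (1 + q ^ (-2 : ℤ))) • (𝓚' * 𝓕 ^ (n - 1)) := by
  have hq2ne : (q : ℂ) ^ 2 ≠ 0 := pow_ne_zero _ hq
  have hzpow : q ^ (-2 : ℤ) = (q ^ 2)⁻¹ := by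
    rw [zpow_neg]
    norm_cast
  have e1 : q + q⁻¹ = (1 + q ^ 2) / q := by field_simp; ring
  have e2 : 1 + (q ^ 2)⁻¹ = (1 + q ^ 2) / q ^ 2 := by field_simp; ring
  have hP : (1 : ℂ) + q ^ 2 * 2 + q ^ 4 ≠ 0 := by
    intro h
    exact hq2 (mul_self_eq_zero.mp (by linear_combination h))
  have hP2 : q ^ 2 + q ^ 4 * 2 + q ^ 6 ≠ 0 := by
    intro h
    exact (mul_ne_zero hq2ne hP) (by linear_combination h)
  have hFK : 𝓕 * 𝓚 = (q ^ 2) • (𝓚 * 𝓕) := by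
    rw [hKF, smul_smul, hzpow, mul_inv_cancel₀ hq2ne, one_smul]
  have hFK' : 𝓕 * 𝓚' = ((q ^ 2)⁻¹) • (𝓚' * 𝓕) := by
    have h1 : 𝓚' * (𝓚 * 𝓕) * 𝓚' = 𝓕 * 𝓚' := by
      rw [← mul_assoc, hK', one_mul]
    rw [hKF, hzpow] at h1
    rw [← h1]
    simp only [mul_smul_comm, smul_mul_assoc, mul_assoc, hK, mul_one]
  have hFnK : ∀ k : ℕ, 𝓕 ^ k * 𝓚 = ((q ^ 2) ^ k) • (𝓚 * 𝓕 ^ k) := by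
    intro k
    induction k with
    | zero => simp
    | succ k ih =>
      rw [pow_succ, mul_assoc, hFK, mul_smul_comm, ← mul_assoc, ih,
        smul_mul_assoc, smul_smul, mul_assoc, ← pow_succ, pow_succ' (q ^ 2)]
  have hFnK' : ∀ k : ℕ, 𝓕 ^ k * 𝓚' = (((q ^ 2)⁻¹) ^ k) • (𝓚' * 𝓕 ^ k) := by
    intro k
    induction k with
    | zero => simp
    | succ k ih =>
      rw [pow_succ, mul_assoc, hFK', mul_smul_comm, ← mul_assoc, ih,
        smul_mul_assoc, smul_smul, mul_assoc, ← pow_succ, pow_succ' ((q ^ 2)⁻¹)]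
  have hEF' : 𝓔 * 𝓕 = (q + q⁻¹)⁻¹ • (𝓚 - 𝓚') - 𝓕 * 𝓔 := eq_sub_of_add_eq hEF
  -- Main claim by induction, with coefficients written without inverse powers
  have claim : ∀ m : ℕ,
      𝓔 * 𝓕 ^ (m + 1) - ((-1 : ℂ) ^ (m + 1)) • (𝓕 ^ (m + 1) * 𝓔)
        = ((1 - (-1 : ℂ) ^ (m + 1) * (q ^ 2) ^ (m + 1)) / ((q + q⁻¹) * (1 + q ^ 2)))
              • (𝓚 * 𝓕 ^ m)
          + (((-1 : ℂ) ^ (m + 1) * ((q ^ 2)⁻¹) ^ (m + 1) - 1)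
                / ((q + q⁻¹) * (1 + (q ^ 2)⁻¹))) • (𝓚' * 𝓕 ^ m) := by
    intro m
    induction m with
    | zero =>
      have h1 : 𝓔 * 𝓕 ^ 1 - ((-1 : ℂ) ^ 1) • (𝓕 ^ 1 * 𝓔) = 𝓔 * 𝓕 + 𝓕 * 𝓔 := by
        simp [pow_one]
      rw [h1, hEF, pow_zero, mul_one, mul_one, smul_sub]
      match_scalars
      · simp only [e1, e2]
        field_simp
        ring
      · simp only [e1, e2]
        field_simp
        rw [zero_add, pow_one, pow_one, mul_sub, mul_left_comm (q ^ 2), mul_one_div_cancel hq2ne]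
        ring
    | succ m ih =>
      have hE : 𝓔 * 𝓕 ^ (m + 1)
          = ((1 - (-1 : ℂ) ^ (m + 1) * (q ^ 2) ^ (m + 1)) / ((q + q⁻¹) * (1 + q ^ 2)))
                • (𝓚 * 𝓕 ^ m)
            + (((-1 : ℂ) ^ (m + 1) * ((q ^ 2)⁻¹) ^ (m + 1) - 1)
                  / ((q + q⁻¹) * (1 + (q ^ 2)⁻¹))) • (𝓚' * 𝓕 ^ m)
            + ((-1 : ℂ) ^ (m + 1)) • (𝓕 ^ (m + 1) * 𝓔) := sub_eq_iff_eq_add.mp ih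
      have hbig : 𝓔 * 𝓕 ^ (m + 1 + 1) = (𝓔 * 𝓕 ^ (m + 1)) * 𝓕 := by
        rw [pow_succ, ← mul_assoc]
      rw [hE] at hbig
      simp only [add_mul, smul_mul_assoc] at hbig
      rw [mul_assoc (𝓚), ← pow_succ, mul_assoc (𝓚'), ← pow_succ,
        mul_assoc (𝓕 ^ (m + 1)), hEF', mul_sub, mul_smul_comm,
        mul_sub, hFnK (m + 1), hFnK' (m + 1), ← mul_assoc, ← pow_succ] at hbig
      rw [hbig]
      match_scalars
      · obtain ⟨s, hs0, hs⟩ : ∃ s : ℂ, s ≠ 0 ∧ (q ^ 2) ^ (m + 1) = s :=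
          ⟨_, pow_ne_zero _ hq2ne, rfl⟩
        rw [pow_succ (q ^ 2) (m + 1), hs]
        simp only [e1, e2]
        field_simp
        have h' : q ^ 2 + 1 ≠ 0 := by rwa [add_comm] at hq2
        field_simp
        ring
      · obtain ⟨s, hs0, hs⟩ : ∃ s : ℂ, s ≠ 0 ∧ ((q ^ 2)⁻¹) ^ (m + 1) = s :=
          ⟨_, pow_ne_zero _ (inv_ne_zero hq2ne), rfl⟩
        rw [pow_succ ((q ^ 2)⁻¹) (m + 1), hs]
        simp only [e1, e2]
        field_simp
        have h' : q ^ 2 + 1 ≠ 0 := by rwa [add_comm] at hq2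
        field_simp
        ring
      · ring
  obtain ⟨m, rfl⟩ : ∃ m, n = m + 1 := ⟨n - 1, (Nat.succ_pred_eq_of_pos hn).symm⟩
  clear hn
  simp only [Nat.add_sub_cancel]
  have hru : (q ^ 2) ^ (m + 1) = (q ^ (m + 1)) ^ 2 := by
    rw [← pow_mul, ← pow_mul, mul_comm]
  have hc1 : ((q ^ (m + 1) * ((q ^ (-((m + 1 : ℕ) : ℤ)) - (-1 : ℂ) ^ (m + 1)
          * q ^ (((m + 1 : ℕ)) : ℤ)) / (q + q⁻¹))) / (1 + q ^ 2))
      = (1 - (-1 : ℂ) ^ (m + 1) * (q ^ 2) ^ (m + 1)) / ((q + q⁻¹) * (1 + q ^ 2)) := by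
    simp only [zpow_neg, zpow_natCast, hru]
    obtain ⟨u, hu0, hu⟩ : ∃ u : ℂ, u ≠ 0 ∧ q ^ (m + 1) = u := ⟨_, pow_ne_zero _ hq, rfl⟩
    rw [hu]
    simp only [e1, e2]
    field_simp
  have hc2 : (((-1 : ℂ) ^ (m + 1) * q ^ (-((m + 1 : ℕ) : ℤ))
          * ((q ^ (-((m + 1 : ℕ) : ℤ)) - (-1 : ℂ) ^ (m + 1) * q ^ (((m + 1 : ℕ)) : ℤ))
            / (q + q⁻¹))) / (1 + q ^ (-2 : ℤ)))
      = ((-1 : ℂ) ^ (m + 1) * ((q ^ 2)⁻¹) ^ (m + 1) - 1)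
          / ((q + q⁻¹) * (1 + (q ^ 2)⁻¹)) := by
    simp only [hzpow, zpow_neg, zpow_natCast, inv_pow, hru]
    obtain ⟨u, hu0, hu⟩ : ∃ u : ℂ, u ≠ 0 ∧ q ^ (m + 1) = u := ⟨_, pow_ne_zero _ hq, rfl⟩
    rw [hu]
    simp only [e1, e2]
    field_simp
    have hneg : ((-1 : ℂ)) ^ (m * 2) = 1 := by
      rw [mul_comm m 2, pow_mul, neg_one_sq, one_pow]
    linear_combination (-u ^ 2) * hneg
  rw [hc1, hc2]
  exact claim m
end

section
/- In an associative superalgebra containing 𝓔, 𝓕, 𝓚 satisfying the U_q(osp(2|1)) relations (𝓔, 𝓕 odd, 𝓚 even invertible), the element √C := 𝓕𝓔 - (q𝓚 - q^{-1}𝓚^{-1})/(q+q^{-1})² super-commutes with the generators: it anticommutes with 𝓔 and 𝓕 and commutes with 𝓚. Consequently its square commutes with 𝓔, 𝓕, and 𝓚. -/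
open Complex

/-- In an algebra with `𝓔, 𝓕, 𝓚` satisfying the `U_q(osp(2|1))`
relations (`𝓚` invertible with inverse `𝓚'`), the element
`√C = 𝓕𝓔 - (q𝓚 - q⁻¹𝓚')/(q+q⁻¹)²` anticommutes with `𝓔` and `𝓕` and commutes
with `𝓚`; consequently its square commutes with `𝓔`, `𝓕`, `𝓚`. -/
theorem osp21_sqrt_casimir_supercommutes (q : ℂ) (hq : q ≠ 0)
    (hq1 : q + q⁻¹ ≠ 0)
    (A : Type*) [Ring A] [Algebra ℂ A]
    (𝓔 𝓕 𝓚 𝓚' : A)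
    (hK : 𝓚 * 𝓚' = 1) (hK' : 𝓚' * 𝓚 = 1)
    (hEF : 𝓔 * 𝓕 + 𝓕 * 𝓔 = (q + q⁻¹)⁻¹ • (𝓚 - 𝓚'))
    (hKE : 𝓚 * 𝓔 = (q ^ 2) • (𝓔 * 𝓚))
    (hKF : 𝓚 * 𝓕 = (q ^ (-2 : ℤ)) • (𝓕 * 𝓚)) :
    let C : A := 𝓕 * 𝓔 - ((q + q⁻¹) ^ 2)⁻¹ • (q • 𝓚 - q⁻¹ • 𝓚')
    (C * 𝓔 + 𝓔 * C = 0) ∧ (C * 𝓕 + 𝓕 * C = 0) ∧ (C * 𝓚 = 𝓚 * C) ∧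
    ((C * C) * 𝓔 = 𝓔 * (C * C)) ∧ ((C * C) * 𝓕 = 𝓕 * (C * C)) ∧
    ((C * C) * 𝓚 = 𝓚 * (C * C)) := by
  intro C
  have hq2 : (q:ℂ) ^ 2 ≠ 0 := pow_ne_zero _ hq
  have hKF' : 𝓚 * 𝓕 = ((q ^ 2)⁻¹) • (𝓕 * 𝓚) := by
    rw [hKF]; congr 1
  -- derived relations with 𝓚'
  have hK'E : 𝓚' * 𝓔 = ((q ^ 2)⁻¹) • (𝓔 * 𝓚') := by
    have h : 𝓔 * 𝓚' = (q ^ 2) • (𝓚' * 𝓔) := by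
      calc 𝓔 * 𝓚' = 𝓚' * (𝓚 * 𝓔) * 𝓚' := by rw [← mul_assoc, hK', one_mul]
        _ = (q ^ 2) • (𝓚' * 𝓔 * (𝓚 * 𝓚')) := by
            rw [hKE, mul_smul_comm, smul_mul_assoc, mul_assoc, mul_assoc, mul_assoc]
        _ = (q ^ 2) • (𝓚' * 𝓔) := by rw [hK, mul_one]
    rw [h, smul_smul, inv_mul_cancel₀ hq2, one_smul]
  have hK'F : 𝓚' * 𝓕 = (q ^ 2) • (𝓕 * 𝓚') := by
    have h : 𝓕 * 𝓚' = ((q ^ 2)⁻¹) • (𝓚' * 𝓕) := by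
      calc 𝓕 * 𝓚' = 𝓚' * (𝓚 * 𝓕) * 𝓚' := by rw [← mul_assoc, hK', one_mul]
        _ = ((q ^ 2)⁻¹) • (𝓚' * 𝓕 * (𝓚 * 𝓚')) := by
            rw [hKF', mul_smul_comm, smul_mul_assoc, mul_assoc, mul_assoc, mul_assoc]
        _ = ((q ^ 2)⁻¹) • (𝓚' * 𝓕) := by rw [hK, mul_one]
    rw [h, smul_smul, mul_inv_cancel₀ hq2, one_smul]
  have hq3 : (1 : ℂ) + q ^ 2 ≠ 0 := by
    have : (1 : ℂ) + q ^ 2 = q * (q + q⁻¹) := by field_simp; ring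
    rw [this]; exact mul_ne_zero hq hq1
  have hq4 : (1 : ℂ) + q ^ 2 * 2 + q ^ 4 ≠ 0 := by
    have : (1 : ℂ) + q ^ 2 * 2 + q ^ 4 = (1 + q ^ 2) ^ 2 := by ring
    rw [this]; exact pow_ne_zero _ hq3
  have e1 : (q + q⁻¹)⁻¹ = q * (1 + q ^ 2)⁻¹ := by
    rw [eq_comm, mul_inv_eq_iff_eq_mul₀ hq3, inv_mul_eq_div, eq_div_iff hq1]
    field_simp; ring
  have e2 : ((q + q⁻¹) ^ 2)⁻¹ = q ^ 2 * ((1 + q ^ 2) ^ 2)⁻¹ := by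
    rw [← inv_pow, e1, mul_pow, inv_pow]
  have hq3' : ((1 : ℂ) + q ^ 2) ^ 2 ≠ 0 := pow_ne_zero _ hq3
  have hEF' : 𝓔 * 𝓕 = (q + q⁻¹)⁻¹ • (𝓚 - 𝓚') - 𝓕 * 𝓔 := eq_sub_of_add_eq hEF
  have hFE : 𝓕 * 𝓔 = (q + q⁻¹)⁻¹ • (𝓚 - 𝓚') - 𝓔 * 𝓕 := by
    rw [hEF']; abel
  have g1 : C * 𝓔 + 𝓔 * C = 0 := by
    show (𝓕 * 𝓔 - ((q + q⁻¹) ^ 2)⁻¹ • (q • 𝓚 - q⁻¹ • 𝓚')) * 𝓔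
        + 𝓔 * (𝓕 * 𝓔 - ((q + q⁻¹) ^ 2)⁻¹ • (q • 𝓚 - q⁻¹ • 𝓚')) = 0
    simp only [mul_sub, sub_mul]
    rw [← mul_assoc 𝓔 𝓕 𝓔, hEF']
    simp only [sub_mul, mul_sub, smul_mul_assoc, smul_sub, smul_smul, mul_smul_comm,
      hKE, hK'E, mul_assoc]
    simp only [e1, e2]; match_scalars <;> field_simp [hq3, hq3'] <;> ring
  have g2 : C * 𝓕 + 𝓕 * C = 0 := by
    show (𝓕 * 𝓔 - ((q + q⁻¹) ^ 2)⁻¹ • (q • 𝓚 - q⁻¹ • 𝓚')) * 𝓕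
        + 𝓕 * (𝓕 * 𝓔 - ((q + q⁻¹) ^ 2)⁻¹ • (q • 𝓚 - q⁻¹ • 𝓚')) = 0
    simp only [mul_sub, sub_mul]
    rw [mul_assoc 𝓕 𝓔 𝓕, hEF']
    simp only [sub_mul, mul_sub, smul_mul_assoc, smul_sub, smul_smul, mul_smul_comm,
      hKF', hK'F, mul_assoc]
    simp only [e1, e2]; match_scalars <;> field_simp [hq3, hq3'] <;> ring
  have g3 : C * 𝓚 = 𝓚 * C := by
    show (𝓕 * 𝓔 - ((q + q⁻¹) ^ 2)⁻¹ • (q • 𝓚 - q⁻¹ • 𝓚')) * 𝓚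
        = 𝓚 * (𝓕 * 𝓔 - ((q + q⁻¹) ^ 2)⁻¹ • (q • 𝓚 - q⁻¹ • 𝓚'))
    have hKK' : 𝓚 * 𝓚' = 𝓚' * 𝓚 := by rw [hK, hK']
    simp only [sub_mul, mul_sub, smul_mul_assoc, smul_sub, smul_smul, mul_smul_comm,
      ← mul_assoc, hKF']
    simp only [smul_mul_assoc, mul_assoc, hKE, mul_smul_comm, smul_smul, hKK']
    simp only [e1, e2]; match_scalars <;> field_simp [hq3, hq3'] <;> ring
  have hCE : C * 𝓔 = -(𝓔 * C) := by linear_combination (norm := abel) g1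
  have hCF : C * 𝓕 = -(𝓕 * C) := by linear_combination (norm := abel) g2
  refine ⟨g1, g2, g3, ?_, ?_, ?_⟩
  · rw [mul_assoc, hCE, mul_neg, ← mul_assoc, hCE, neg_mul, neg_neg, mul_assoc]
  · rw [mul_assoc, hCF, mul_neg, ← mul_assoc, hCF, neg_mul, neg_neg, mul_assoc]
  · rw [mul_assoc, g3, ← mul_assoc, g3, mul_assoc]
end

section
/- Let R be a commutative ℂ-algebra and let q be a complex number that is not a root of unity, λ an invertible formal variable. Suppose given invertible elements Q₊(μ), Q₋(μ) ∈ R for each μ in the multiplicative group generated by λ and q^{1/2}, satisfying the quantum super-Wronskian relation Q₊(q^{1/2}μ)Q₋(q^{-1/2}μ) + Q₊(q^{-1/2}μ)Q₋(q^{1/2}μ) = c for a fixed central invertible constant c and all μ. Define c·T_s(μ) = Q₊(q^{(s+1)/2}μ)Q₋(q^{-(s+1)/2}μ) + (-1)^s Q₊(q^{-(s+1)/2}μ)Q₋(q^{(s+1)/2}μ) for integers s ≥ 0. Then the fusion relation holds: T_s(q^{1/2}μ)·T_s(q^{-1/2}μ) = T_{s+1}(μ)·T_{s-1}(μ) + (-1)^s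 for all s ≥ 1. -/
/-- fusion relation for transfer matrices.  Values `Q₊(μ), Q₋(μ)`
are invertible elements of a commutative ring `R`, indexed by a commutative
group `G` of spectral parameters on which `r = q^{1/2}` acts by multiplication.
Given the quantum super-Wronskian relation
`Q₊(q^{1/2}μ)Q₋(q^{-1/2}μ) + Q₊(q^{-1/2}μ)Q₋(q^{1/2}μ) = c` and the definition
`c·T_s(μ) = Q₊(q^{(s+1)/2}μ)Q₋(q^{-(s+1)/2}μ) + (-1)^s Q₊(q^{-(s+1)/2}μ)Q₋(q^{(s+1)/2}μ)`,
the fusion relation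
`T_s(q^{1/2}μ)T_s(q^{-1/2}μ) = T_{s+1}(μ)T_{s-1}(μ) + (-1)^s` holds for `s ≥ 1`. -/
theorem fusion_relation (R : Type*) [CommRing R]
    (G : Type*) [CommGroup G] (r : G)
    (Qp Qm : G → Rˣ) (c : Rˣ)
    (hW : ∀ μ : G, (Qp (r * μ) : R) * (Qm (r⁻¹ * μ) : R)
        + (Qp (r⁻¹ * μ) : R) * (Qm (r * μ) : R) = (c : R))
    (T : ℕ → G → R)
    (hT : ∀ (s : ℕ) (μ : G), (c : R) * T s μ
        = (Qp (r ^ (s + 1) * μ) : R) * (Qm ((r ^ (s + 1))⁻¹ * μ) : R)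
          + (-1 : R) ^ s * ((Qp ((r ^ (s + 1))⁻¹ * μ) : R) * (Qm (r ^ (s + 1) * μ) : R)))
    (s : ℕ) (hs : 1 ≤ s) (μ : G) :
    T s (r * μ) * T s (r⁻¹ * μ) = T (s + 1) μ * T (s - 1) μ + (-1 : R) ^ s := by
  obtain ⟨t, rfl⟩ : ∃ t, s = t + 1 := ⟨s - 1, (Nat.succ_pred_eq_of_pos hs).symm⟩
  simp only [Nat.add_sub_cancel]
  have h1 := hT (t + 1) (r * μ)
  have h2 := hT (t + 1) (r⁻¹ * μ)
  have h3 := hT (t + 2) μ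
  have h4 := hT t μ
  have w1 := hW (r ^ (t + 2) * μ)
  have w2 := hW ((r ^ (t + 2))⁻¹ * μ)
  have e1 : r ^ (t + 1 + 1) * (r * μ) = r ^ (t + 3) * μ := by group
  have e2 : (r ^ (t + 1 + 1))⁻¹ * (r * μ) = (r ^ (t + 1))⁻¹ * μ := by group
  have e3 : r ^ (t + 1 + 1) * (r⁻¹ * μ) = r ^ (t + 1) * μ := by group
  have e4 : (r ^ (t + 1 + 1))⁻¹ * (r⁻¹ * μ) = (r ^ (t + 3))⁻¹ * μ := by group
  have e5 : r ^ (t + 2 + 1) * μ = r ^ (t + 3) * μ := by group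
  have e6 : (r ^ (t + 2 + 1))⁻¹ * μ = (r ^ (t + 3))⁻¹ * μ := by group
  have e7 : r ^ (t + 0 + 1) * μ = r ^ (t + 1) * μ := by group
  have e8 : (r ^ (t + 0 + 1))⁻¹ * μ = (r ^ (t + 1))⁻¹ * μ := by group
  have e9 : r * (r ^ (t + 2) * μ) = r ^ (t + 3) * μ := by group
  have e10 : r⁻¹ * (r ^ (t + 2) * μ) = r ^ (t + 1) * μ := by group
  have e11 : r * ((r ^ (t + 2))⁻¹ * μ) = (r ^ (t + 1))⁻¹ * μ := by group
  have e12 : r⁻¹ * ((r ^ (t + 2))⁻¹ * μ) = (r ^ (t + 3))⁻¹ * μ := by group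
  rw [e1, e2] at h1
  rw [e3, e4] at h2
  rw [e5, e6] at h3
  rw [e7, e8] at h4
  rw [e9, e10] at w1
  rw [e11, e12] at w2
  have key : (c : R) * T (t + 1) (r * μ) * ((c : R) * T (t + 1) (r⁻¹ * μ))
      = (c : R) * T (t + 2) μ * ((c : R) * T t μ)
        + (-1 : R) ^ (t + 1) * ((c : R) * (c : R)) := by
    rw [h1, h2, h3, h4]
    linear_combination (-1 : R) ^ (t + 1) *
        ((Qp ((r ^ (t + 1))⁻¹ * μ) * (Qm ((r ^ (t + 3))⁻¹ * μ) : R)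
          + (Qp ((r ^ (t + 3))⁻¹ * μ) : R) * (Qm ((r ^ (t + 1))⁻¹ * μ) : R)) * w1
          + (c : R) * w2)
  exact (Units.mul_right_inj (c * c)).mp (by push_cast; linear_combination key)
end

section
/- Under the same hypotheses (commutative ring, Wronskian relation Q₊(q^{1/2}μ)Q₋(q^{-1/2}μ) + Q₊(q^{-1/2}μ)Q₋(q^{1/2}μ) = c, and c·T₁(μ) = Q₊(qμ)Q₋(q^{-1}μ) - Q₊(q^{-1}μ)Q₋(qμ)), the Baxter T-Q relation holds: T₁(μ)·Q₊(μ) = Q₊(qμ) - Q₊(q^{-1}μ) and T₁(μ)·Q₋(μ) = Q₋(q^{-1}μ) - Q₋(qμ). -/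
/-- Baxter T-Q relation.  With the quantum super-Wronskian
relation `Q₊(q^{1/2}μ)Q₋(q^{-1/2}μ) + Q₊(q^{-1/2}μ)Q₋(q^{1/2}μ) = c` and
`c·T₁(μ) = Q₊(qμ)Q₋(q⁻¹μ) - Q₊(q⁻¹μ)Q₋(qμ)` (here `r = q^{1/2}` acts on the
group of spectral parameters), one has
`T₁(μ)Q₊(μ) = Q₊(qμ) - Q₊(q⁻¹μ)` and `T₁(μ)Q₋(μ) = Q₋(q⁻¹μ) - Q₋(qμ)`. -/
theorem baxter_TQ_relation (R : Type*) [CommRing R]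
    (G : Type*) [CommGroup G] (r : G)
    (Qp Qm : G → Rˣ) (c : Rˣ)
    (hW : ∀ μ : G, (Qp (r * μ) : R) * (Qm (r⁻¹ * μ) : R)
        + (Qp (r⁻¹ * μ) : R) * (Qm (r * μ) : R) = (c : R))
    (T₁ : G → R)
    (hT : ∀ μ : G, (c : R) * T₁ μ
        = (Qp (r ^ 2 * μ) : R) * (Qm ((r ^ 2)⁻¹ * μ) : R)
          - (Qp ((r ^ 2)⁻¹ * μ) : R) * (Qm (r ^ 2 * μ) : R))
    (μ : G) :
    T₁ μ * (Qp μ : R) = (Qp (r ^ 2 * μ) : R) - (Qp ((r ^ 2)⁻¹ * μ) : R) ∧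
    T₁ μ * (Qm μ : R) = (Qm ((r ^ 2)⁻¹ * μ) : R) - (Qm (r ^ 2 * μ) : R) := by
  have e1 : r * (r * μ) = r ^ 2 * μ := by rw [pow_two, mul_assoc]
  have e2 : r⁻¹ * (r * μ) = μ := inv_mul_cancel_left r μ
  have e3 : r * (r⁻¹ * μ) = μ := mul_inv_cancel_left r μ
  have e4 : r⁻¹ * (r⁻¹ * μ) = (r ^ 2)⁻¹ * μ := by rw [pow_two, mul_inv, mul_assoc]
  have h1 := hW (r * μ)
  have h2 := hW (r⁻¹ * μ)
  rw [e1, e2] at h1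
  rw [e3, e4] at h2
  have hT' := hT μ
  constructor
  · refine (Units.mul_right_inj c).mp ?_
    calc (c : R) * (T₁ μ * (Qp μ : R)) = ((c : R) * T₁ μ) * (Qp μ : R) := by ring
      _ = ((Qp (r ^ 2 * μ) : R) * (Qm ((r ^ 2)⁻¹ * μ) : R)
          - (Qp ((r ^ 2)⁻¹ * μ) : R) * (Qm (r ^ 2 * μ) : R)) * (Qp μ : R) := by rw [hT']
      _ = (Qp (r ^ 2 * μ) : R) * ((Qp μ : R) * (Qm ((r ^ 2)⁻¹ * μ) : R)
            + (Qp ((r ^ 2)⁻¹ * μ) : R) * (Qm μ : R))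
          - (Qp ((r ^ 2)⁻¹ * μ) : R) * ((Qp (r ^ 2 * μ) : R) * (Qm μ : R)
            + (Qp μ : R) * (Qm (r ^ 2 * μ) : R)) := by ring
      _ = (c : R) * ((Qp (r ^ 2 * μ) : R) - (Qp ((r ^ 2)⁻¹ * μ) : R)) := by
          rw [h1, h2]; ring
  · refine (Units.mul_right_inj c).mp ?_
    calc (c : R) * (T₁ μ * (Qm μ : R)) = ((c : R) * T₁ μ) * (Qm μ : R) := by ring
      _ = ((Qp (r ^ 2 * μ) : R) * (Qm ((r ^ 2)⁻¹ * μ) : R)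
          - (Qp ((r ^ 2)⁻¹ * μ) : R) * (Qm (r ^ 2 * μ) : R)) * (Qm μ : R) := by rw [hT']
      _ = (Qm ((r ^ 2)⁻¹ * μ) : R) * ((Qp (r ^ 2 * μ) : R) * (Qm μ : R)
            + (Qp μ : R) * (Qm (r ^ 2 * μ) : R))
          - (Qm (r ^ 2 * μ) : R) * ((Qp μ : R) * (Qm ((r ^ 2)⁻¹ * μ) : R)
            + (Qp ((r ^ 2)⁻¹ * μ) : R) * (Qm μ : R)) := by ring
      _ = (c : R) * ((Qm ((r ^ 2)⁻¹ * μ) : R) - (Qm (r ^ 2 * μ) : R)) := by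
          rw [h1, h2]; ring
end

section
/- Let F be a field, q ∈ F invertible with q^{k} ≠ ±1 for relevant k, and suppose Q₊(μ), Q₋(μ) ∈ F* satisfy Q₊(q^{1/2}μ)Q₋(q^{-1/2}μ) + Q₊(q^{-1/2}μ)Q₋(q^{1/2}μ) = c for all μ. Define c·T_s(μ) = Q₊(q^{(s+1)/2}μ)Q₋(q^{-(s+1)/2}μ) + (-1)^s Q₊(q^{-(s+1)/2}μ)Q₋(q^{(s+1)/2}μ). Then for even s ≥ 0, T_s(μ) = Q₊(q^{(s+1)/2}μ)·Q₊(q^{-(s+1)/2}μ)·∑_{k=-s/2}^{s/2} (-1)^{k+s/2} / (Q₊(q^{k+1/2}μ)·Q₊(q^{k-1/2}μ)). -/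
open Finset

private lemma tel_aux (F : Type*) [Field F] (f : ℤ → F) :
    ∀ (n : ℕ) (a : ℤ),
      ∑ k ∈ Finset.Icc a (a + (n : ℤ)), (-1 : F) ^ (k - a) * (f (2*k-1) + f (2*k+1))
        = f (2*a-1) + (-1 : F) ^ (n : ℕ) * f (2*(a+n)+1) := by
  intro n
  induction n with
  | zero => intro a; simp
  | succ n ih =>
    intro a
    have hstep : (a : ℤ) + ((n+1 : ℕ) : ℤ) = (a + n) + 1 := by push_cast; ring
    have hins : Finset.Icc a ((a + (n:ℤ)) + 1)
        = insert ((a + (n:ℤ)) + 1) (Finset.Icc a (a + (n:ℤ))) := by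
      ext x; simp only [Finset.mem_Icc, Finset.mem_insert]; omega
    rw [hstep, hins, Finset.sum_insert (by simp only [Finset.mem_Icc]; omega), ih]
    have e1 : ((a + (n:ℤ)) + 1 - a) = ((n:ℤ) + 1) := by ring
    have e2 : (2*((a + (n:ℤ)) + 1) - 1) = 2*(a+(n:ℤ)) + 1 := by ring
    have e3 : (2*((a + (n:ℤ)) + 1) + 1) = 2*(a+((n:ℕ)+1:ℕ):ℤ) + 1 := by push_cast; ring
    rw [e1, e2, e3]
    have e4 : (-1 : F) ^ ((n:ℤ) + 1) = -(-1 : F) ^ (n : ℕ) := by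
      rw [zpow_add_one₀ (by norm_num), zpow_natCast]; ring
    rw [e4, pow_succ]
    ring

/-- telescoping formula for transfer matrices in terms of a
single Q-operator.  `Q₊(μ), Q₋(μ)` are nonzero elements of a field `F` indexed
by a commutative group `G` of spectral parameters with `r = q^{1/2}`, and
`c·T_s(μ) = Q₊(q^{(s+1)/2}μ)Q₋(q^{-(s+1)/2}μ) + (-1)^s Q₊(q^{-(s+1)/2}μ)Q₋(q^{(s+1)/2}μ)`.
Under the quantum super-Wronskian relation, for even `s = 2t`:
`T_s(μ) = Q₊(q^{(s+1)/2}μ)Q₊(q^{-(s+1)/2}μ)·∑_{k=-s/2}^{s/2} (-1)^{k+s/2}/(Q₊(q^{k+1/2}μ)Q₊(q^{k-1/2}μ))`. -/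
theorem transfer_matrix_Q_sum (F : Type*) [Field F]
    (G : Type*) [CommGroup G] (r : G)
    (Qp Qm : G → Fˣ) (c : Fˣ)
    (hW : ∀ μ : G, (Qp (r * μ) : F) * (Qm (r⁻¹ * μ) : F)
        + (Qp (r⁻¹ * μ) : F) * (Qm (r * μ) : F) = (c : F))
    (T : ℕ → G → F)
    (hT : ∀ (s : ℕ) (μ : G), (c : F) * T s μ
        = (Qp (r ^ (s + 1) * μ) : F) * (Qm ((r ^ (s + 1))⁻¹ * μ) : F)
          + (-1 : F) ^ s * ((Qp ((r ^ (s + 1))⁻¹ * μ) : F) * (Qm (r ^ (s + 1) * μ) : F)))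
    (t : ℕ) (μ : G) :
    T (2 * t) μ
      = (Qp (r ^ (2 * t + 1) * μ) : F) * (Qp ((r ^ (2 * t + 1))⁻¹ * μ) : F) *
          ∑ k ∈ Finset.Icc (-(t : ℤ)) (t : ℤ),
            (-1 : F) ^ (k + t) /
              ((Qp (r ^ (2 * k + 1) * μ) : F) * (Qp (r ^ (2 * k - 1) * μ) : F)) := by
  have hc : (c : F) ≠ 0 := Units.ne_zero c
  set f : ℤ → F := fun j => (Qm (r ^ j * μ) : F) / (Qp (r ^ j * μ) : F) with hf
  -- key pointwise identity from the Wronskian relation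
  have key : ∀ k : ℤ,
      (c : F) / ((Qp (r ^ (2*k+1) * μ) : F) * (Qp (r ^ (2*k-1) * μ) : F))
        = f (2*k-1) + f (2*k+1) := by
    intro k
    have h1 : r ^ (2*k+1) * μ = r * (r ^ (2*k) * μ) := by
      rw [zpow_add, zpow_one]; group
    have h2 : r ^ (2*k-1) * μ = r⁻¹ * (r ^ (2*k) * μ) := by
      rw [sub_eq_add_neg, zpow_add, zpow_neg, zpow_one]; group
    have hw := hW (r ^ (2*k) * μ)
    rw [← h1, ← h2] at hw
    simp only [hf]
    rw [div_add_div _ _ (Units.ne_zero _) (Units.ne_zero _),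
      show (Qm (r ^ (2*k-1) * μ) : F) * (Qp (r ^ (2*k+1) * μ) : F)
          + (Qp (r ^ (2*k-1) * μ) : F) * (Qm (r ^ (2*k+1) * μ) : F) = (c : F) from by
        linear_combination hw,
      mul_comm ((Qp (r ^ (2*k-1) * μ) : F))]
  -- rewrite the sum using the key identity and telescope
  have hsum : ∑ k ∈ Finset.Icc (-(t : ℤ)) (t : ℤ),
        (-1 : F) ^ (k + t) /
          ((Qp (r ^ (2 * k + 1) * μ) : F) * (Qp (r ^ (2 * k - 1) * μ) : F))
      = (c : F)⁻¹ * (f (2*(-(t:ℤ))-1) + f (2*(t:ℤ)+1)) := by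
    have hb : (-(t:ℤ)) + ((2*t : ℕ) : ℤ) = (t : ℤ) := by push_cast; ring
    have htel := tel_aux F f (2*t) (-(t:ℤ))
    rw [hb] at htel
    have hcong : ∑ k ∈ Finset.Icc (-(t : ℤ)) (t : ℤ),
          (-1 : F) ^ (k + t) /
            ((Qp (r ^ (2 * k + 1) * μ) : F) * (Qp (r ^ (2 * k - 1) * μ) : F))
        = ∑ k ∈ Finset.Icc (-(t : ℤ)) (t : ℤ),
          (c : F)⁻¹ * ((-1 : F) ^ (k - (-(t:ℤ))) * (f (2*k-1) + f (2*k+1))) := by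
      refine Finset.sum_congr rfl fun k _ => ?_
      rw [sub_neg_eq_add, ← key k, div_eq_mul_inv, div_eq_mul_inv]
      ring_nf
      rw [mul_inv_cancel_right₀ hc]
    rw [hcong, ← Finset.mul_sum, htel]
    have hsign : (-1 : F) ^ (2*t) = 1 := by
      rw [pow_mul]; norm_num
    rw [hsign, one_mul]
  rw [hsum]
  -- relate natural and integer powers
  have g1 : r ^ (2*(t:ℤ)+1) * μ = r ^ (2*t+1) * μ := by
    rw [← zpow_natCast r (2*t+1)]; norm_num
  have g2 : r ^ (2*(-(t:ℤ))-1) * μ = (r ^ (2*t+1))⁻¹ * μ := by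
    rw [← zpow_natCast r (2*t+1), ← zpow_neg]; congr 1; push_cast; ring
  have hTeq := hT (2*t) μ
  have hsign : (-1 : F) ^ (2*t) = 1 := by rw [pow_mul]; norm_num
  rw [hsign, one_mul] at hTeq
  apply mul_left_cancel₀ hc
  rw [hTeq]
  simp only [hf, g1, g2]
  have ha : (Qp (r ^ (2*t+1) * μ) : F) ≠ 0 := Units.ne_zero _
  have hb : (Qp ((r ^ (2*t+1))⁻¹ * μ) : F) ≠ 0 := Units.ne_zero _
  field_simp
end
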